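/- Let E ⊆ Z^n be a d-sparse set and M a rank-(d+1) paving matroid on E. Let P be the Z^n-invariant d-partition of Z^n generated by the hyperplanes of M (all translates of hyperplanes, together with all d-subsets not contained in any translate). Then the blocks of P meeting E in at least d elements are exactly the hyperplanes of M; equivalently, the restriction to E of the paving matroid on Z^n determined by P equals M. -/

import Mathlib

open Set Matroid

variable {n : ℕ}

/-- A circuit of a matroid: a minimal dependent set. -/
def Matroid.IsCircuit' {α : Type*} (M : Matroid α) (C : Set α) : Prop :=
  M.Dep C ∧ ∀ D, M.Dep D → D ⊆ C → D = C

/-- The rank of a matroid, as an extended natural number. -/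
noncomputable def Matroid.eRank' {α : Type*} (M : Matroid α) : ℕ∞ :=
  ⨆ B ∈ {B | M.IsBase B}, B.encard

/-- A hyperplane of a finite-rank matroid: a maximal subset of the ground set
of rank `rank M - 1`. -/
def Matroid.IsHyperplane {α : Type*} (M : Matroid α) (H : Set α) : Prop :=
  H ⊆ M.E ∧ (M ↾ H).eRank' + 1 = M.eRank' ∧
    ∀ H', H ⊂ H' → H' ⊆ M.E → (M ↾ H').eRank' + 1 ≠ M.eRank'

/-- The translate `u + S` of a subset `S ⊆ ℤⁿ`. -/
def ztranslate (u : Fin n → ℤ) (S : Set (Fin n → ℤ)) : Set (Fin n → ℤ) :=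
  (fun x => u + x) '' S

/-- A subset `S ⊆ ℤⁿ` is `d`-sparse if `|S ∩ (u + S)| < d` for every nonzero
`u ∈ ℤⁿ`. -/
def ZSparse (d : ℕ) (S : Set (Fin n → ℤ)) : Prop :=
  ∀ u : Fin n → ℤ, u ≠ 0 → (S ∩ ztranslate u S).encard < d

/-- Let `E ⊆ ℤⁿ` be `d`-sparse and `M` a rank-`(d+1)` paving matroid on `E`.
In the `ℤⁿ`-invariant `d`-partition generated by the hyperplanes of `M` (all
translates of hyperplanes together with all `d`-subsets contained in no
translate), the blocks meeting `E` in at least `d` elements are exactly the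
hyperplanes of `M`; hence the restriction to `E` of the associated paving
matroid on `ℤⁿ` equals `M`. -/
theorem generated_partition_restricts_to_hyperplanes (d : ℕ)
    (E : Set (Fin n → ℤ)) (hE : ZSparse d E) (M : Matroid (Fin n → ℤ))
    (hME : M.E = E) (hrank : M.eRank' = d + 1)
    (hpaving : ∀ C, M.IsCircuit' C → C.encard = d + 1 ∨ C.encard = d + 2) :
    {S ∈ ({T | ∃ u : Fin n → ℤ, ∃ H, M.IsHyperplane H ∧ T = ztranslate u H} ∪
          {D : Set (Fin n → ℤ) | D.encard = d ∧ ∀ u : Fin n → ℤ, ∀ H,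
            M.IsHyperplane H → ¬ D ⊆ ztranslate u H}) |
        (d : ℕ∞) ≤ (S ∩ E).encard} =
      {H | M.IsHyperplane H} := by
  subst hME
  have eRank_eq : ∀ (N : Matroid (Fin n → ℤ)) (B : Set (Fin n → ℤ)), N.IsBase B →
      N.eRank' = B.encard := by
    intro N B hB
    refine le_antisymm (iSup₂_le fun B' hB' => (hB'.encard_eq_encard_of_isBase hB).le) ?_
    exact le_iSup₂_of_le B hB le_rfl
  -- every hyperplane has at least d elements
  have hyp_card : ∀ H, M.IsHyperplane H → (d : ℕ∞) ≤ H.encard := by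
    intro H hH
    have h1 : (M ↾ H).eRank' + 1 = (d : ℕ∞) + 1 := hH.2.1.trans hrank
    have h2 : (M ↾ H).eRank' = (d : ℕ∞) :=
      WithTop.add_right_cancel (by simp : (1 : ℕ∞) ≠ ⊤) h1
    obtain ⟨B, hB⟩ := (M ↾ H).exists_isBase
    have h3 := eRank_eq _ _ hB
    have h4 : B ⊆ H := hB.subset_ground
    calc (d : ℕ∞) = B.encard := by rw [← h3, h2]
      _ ≤ H.encard := encard_mono h4
  -- every d-subset of the ground set is contained in a hyperplane
  have exists_hyp : ∀ S : Set (Fin n → ℤ), S ⊆ M.E → S.encard = d →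
      ∃ H, M.IsHyperplane H ∧ S ⊆ H := by
    intro S hSE hScard
    have hfin : S.Finite := finite_of_encard_eq_coe hScard
    have hind : M.Indep S := by
      by_contra hdep
      have hdepS : M.Dep S := ⟨hdep, hSE⟩
      have hfs : {C | C ⊆ S ∧ M.Dep C}.Finite :=
        hfin.powerset.subset fun C hC => hC.1
      obtain ⟨C, hCmem, hCmin⟩ :=
        hfs.exists_minimal ⟨S, subset_rfl, hdepS⟩
      have hcirc : M.IsCircuit' C := by
        refine ⟨hCmem.2, fun D hD hDC => ?_⟩
        exact hDC.antisymm (hCmin ⟨hDC.trans hCmem.1, hD⟩ hDC)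
      have hle : C.encard ≤ (d : ℕ∞) := hScard ▸ encard_mono hCmem.1
      rcases hpaving C hcirc with h | h <;> rw [h] at hle <;>
        · norm_cast at hle; omega
    have hSH : S ⊆ M.closure S := M.subset_closure S hSE
    refine ⟨M.closure S, ⟨M.closure_subset_ground S, ?_, ?_⟩, hSH⟩
    · have hb : (M ↾ M.closure S).IsBase S := hind.isBasis_closure.isBase_restrict
      rw [eRank_eq _ _ hb, hScard, hrank]
    · rintro H' hss hH'E heq
      obtain ⟨x, hxH', hxH⟩ := exists_of_ssubset hss
      have hxS : x ∉ S := fun h => hxH (hSH h)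
      have hind' : M.Indep (insert x S) := by
        rw [hind.insert_indep_iff_of_notMem hxS]
        exact ⟨hH'E hxH', hxH⟩
      have hsub : insert x S ⊆ H' := insert_subset hxH' (hSH.trans hss.subset)
      have hrind : (M ↾ H').Indep (insert x S) :=
        hind'.indep_restrict_of_subset hsub
      obtain ⟨B, hB, hBsub⟩ := Matroid.Indep.exists_isBase_superset hrind
      have hle : (insert x S).encard ≤ (M ↾ H').eRank' :=
        (eRank_eq _ _ hB) ▸ encard_mono hBsub
      have h1 : (M ↾ H').eRank' = (d : ℕ∞) :=
        WithTop.add_right_cancel (by simp : (1 : ℕ∞) ≠ ⊤) (heq.trans hrank)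
      rw [encard_insert_of_notMem hxS, hScard, h1] at hle
      norm_cast at hle; omega
  have ztranslate_zero : ∀ S : Set (Fin n → ℤ), ztranslate 0 S = S := by
    intro S; simp [ztranslate]
  ext S
  simp only [mem_setOf_eq, mem_sep_iff, mem_union]
  constructor
  · rintro ⟨h1 | h2, hcard⟩
    · obtain ⟨u, H, hH, rfl⟩ := h1
      rcases eq_or_ne u 0 with rfl | hu
      · rwa [ztranslate_zero]
      · exfalso
        have hsub : ztranslate u H ∩ M.E ⊆ M.E ∩ ztranslate u M.E := by
          rintro x ⟨hx1, hx2⟩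
          exact ⟨hx2, image_mono hH.1 hx1⟩
        exact absurd (hcard.trans (encard_mono hsub)) (not_le.2 (hE u hu))
    · exfalso
      have hSE : S ⊆ M.E := by
        by_contra hno
        obtain ⟨x, hxS, hxE⟩ := not_subset.1 hno
        have h1 : S ∩ M.E ⊂ S := ⟨inter_subset_left, fun h => hxE (h hxS).2⟩
        have hfin : S.Finite := finite_of_encard_eq_coe h2.1
        have := ((hfin.subset inter_subset_left).encard_lt_encard h1).trans_le h2.1.le
        exact absurd hcard (not_le.2 this)
      obtain ⟨H, hH, hSH⟩ := exists_hyp S hSE h2.1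
      exact h2.2 0 H hH (by rwa [ztranslate_zero])
  · intro hH
    refine ⟨Or.inl ⟨0, S, hH, (ztranslate_zero S).symm⟩, ?_⟩
    rw [inter_eq_self_of_subset_left hH.1]
    exact hyp_card S hH
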